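/- Let r, r* > 0 with r < r*, and θ, θ* ∈ [0,π], φ, φ* ∈ ℝ. Set 𝐫 = (r sinθ cosφ, r sinθ sinφ, r cosθ) and 𝐫* defined analogously. Then 1/‖𝐫−𝐫*‖ = Σ_{n=0}^∞ (rⁿ/(r*)^{n+1}) · P_n(cosθ cosθ* + sinθ sinθ* cos(φ−φ*)), where P_n is the Legendre polynomial, and the series converges absolutely. -/

import Mathlib

open Real

/-- The Legendre polynomial `P_n`, via the Rodrigues formula. -/
noncomputable def legendrePoly (n : ℕ) (x : ℝ) : ℝ :=
  (1 / (2^n * (Nat.factorial n : ℝ))) * iteratedDeriv n (fun y => (y^2 - 1)^n) x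

open Finset Polynomial

noncomputable def cb (n : ℕ) : ℝ := n.centralBinom / 4 ^ n

lemma cb_zero : cb 0 = 1 := by simp [cb, Nat.centralBinom_zero]

lemma cb_pos (n : ℕ) : 0 < cb n :=
  div_pos (by exact_mod_cast n.centralBinom_pos) (by positivity)

lemma centralBinom_le_four_pow (n : ℕ) : n.centralBinom ≤ 4 ^ n := by
  induction n with
  | zero => simp
  | succ n ih =>
    have h := Nat.succ_mul_centralBinom_succ n
    have h2 : (n+1) * Nat.centralBinom (n+1) ≤ (n+1) * 4^(n+1) := by
      rw [h]
      calc 2*(2*n+1) * n.centralBinom ≤ (4*(n+1)) * 4^n :=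
            Nat.mul_le_mul (by omega) ih
        _ = (n+1)*4^(n+1) := by ring
    exact Nat.le_of_mul_le_mul_left h2 (by omega)

lemma cb_le_one (n : ℕ) : cb n ≤ 1 := by
  rw [cb, div_le_one (by positivity)]
  exact_mod_cast centralBinom_le_four_pow n

lemma cb_rec (n : ℕ) : (n + 1 : ℝ) * cb (n+1) = ((n : ℝ) + 1/2) * cb n := by
  have h := Nat.succ_mul_centralBinom_succ n
  have h' : ((n+1 : ℕ) : ℝ) * (Nat.centralBinom (n+1) : ℝ)
      = 2 * (2*(n:ℝ)+1) * (n.centralBinom : ℝ) := by exact_mod_cast congrArg (Nat.cast (R := ℝ)) h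
  rw [cb, cb]
  push_cast at h' ⊢
  field_simp
  linear_combination (2 * (4:ℝ)^n) * h'

lemma cb_sum (n : ℕ) : ∑ j ∈ range (n+1), cb j * cb (n - j) = 1 := by
  induction n with
  | zero => simp [cb_zero]
  | succ n ih =>
    have S1eq : ∑ j ∈ range (n+2), (j:ℝ) * cb j * cb (n+1-j)
        = ∑ i ∈ range (n+1), ((i:ℝ)+1/2) * (cb i * cb (n-i)) := by
      rw [Finset.sum_range_succ']
      simp only [Nat.cast_zero, zero_mul]
      rw [add_zero]
      refine Finset.sum_congr rfl fun i hi => ?_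
      have h1 : n + 1 - (i+1) = n - i := by omega
      have h2 : ((i:ℕ)+1 : ℝ) * cb (i+1) = ((i:ℝ)+1/2) * cb i := by
        have := cb_rec i; push_cast at this ⊢; linarith [this]
      rw [h1]
      push_cast
      calc ((i:ℝ)+1) * cb (i+1) * cb (n-i) = (((i:ℝ)+1) * cb (i+1)) * cb (n-i) := by ring
        _ = (((i:ℝ)+1/2) * cb i) * cb (n-i) := by rw [h2]
        _ = ((i:ℝ)+1/2) * (cb i * cb (n-i)) := by ring
    have sym : ∑ i ∈ range (n+1), ((i:ℝ)+1/2) * (cb i * cb (n-i))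
        = ∑ i ∈ range (n+1), (((n-i : ℕ):ℝ)+1/2) * (cb i * cb (n-i)) := by
      rw [← Finset.sum_range_reflect]
      refine Finset.sum_congr rfl fun i hi => ?_
      have hi' : i ≤ n := by simpa [Nat.lt_succ_iff] using Finset.mem_range.mp hi
      simp only [Nat.add_sub_cancel]
      have h1 : n - (n - i) = i := by omega
      rw [h1]; ring
    have doubled : (2:ℝ) * ∑ i ∈ range (n+1), ((i:ℝ)+1/2) * (cb i * cb (n-i))
        = ((n:ℝ)+1) * ∑ i ∈ range (n+1), cb i * cb (n-i) := by
      rw [two_mul]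
      nth_rewrite 2 [sym]
      rw [← Finset.sum_add_distrib, Finset.mul_sum]
      refine Finset.sum_congr rfl fun i hi => ?_
      have hi' : i ≤ n := by simpa [Nat.lt_succ_iff] using Finset.mem_range.mp hi
      have : ((n-i : ℕ):ℝ) = (n:ℝ) - (i:ℝ) := by push_cast [hi']; ring
      rw [this]; ring
    have refl2 : ∑ j ∈ range (n+2), ((n+1-j : ℕ) : ℝ) * cb j * cb (n+1-j)
        = ∑ j ∈ range (n+2), (j:ℝ) * cb j * cb (n+1-j) := by
      rw [← Finset.sum_range_reflect]
      refine Finset.sum_congr rfl fun j hj => ?_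
      have hj' : j ≤ n+1 := by simpa [Nat.lt_succ_iff] using Finset.mem_range.mp hj
      simp only [show n+2-1 = n+1 from rfl]
      have h1 : n + 1 - (n + 1 - j) = j := by omega
      rw [h1]; ring
    have split : ((n:ℝ)+1) * ∑ j ∈ range (n+2), cb j * cb (n+1-j)
        = (∑ j ∈ range (n+2), (j:ℝ) * cb j * cb (n+1-j))
          + ∑ j ∈ range (n+2), ((n+1-j : ℕ) : ℝ) * cb j * cb (n+1-j) := by
      rw [Finset.mul_sum, ← Finset.sum_add_distrib]
      refine Finset.sum_congr rfl fun j hj => ?_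
      have hj' : j ≤ n+1 := by simpa [Nat.lt_succ_iff] using Finset.mem_range.mp hj
      have : ((n+1-j : ℕ) : ℝ) = (n:ℝ)+1-(j:ℝ) := by push_cast [hj']; ring
      rw [this]; ring
    have key : ((n:ℝ)+1) * ∑ j ∈ range (n+2), cb j * cb (n+1-j)
        = ((n:ℝ)+1) * ∑ j ∈ range (n+1), cb j * cb (n-j) := by
      rw [split, refl2, S1eq, ← two_mul, doubled]
    have hne : ((n:ℝ)+1) ≠ 0 := by positivity
    have key2 : ((n:ℝ)+1) * ∑ j ∈ range (n+2), cb j * cb (n+1-j) = ((n:ℝ)+1) * 1 := by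
      rw [key, ih]
    simpa using mul_left_cancel₀ hne key2

lemma summable_norm_cb_mul_pow {u : ℂ} (hu : ‖u‖ < 1) :
    Summable fun n => ‖(cb n : ℂ) * u ^ n‖ := by
  refine Summable.of_nonneg_of_le (fun n => norm_nonneg _) (fun n => ?_)
    (summable_geometric_of_lt_one (norm_nonneg u) hu)
  rw [norm_mul, norm_pow, Complex.norm_real]
  calc ‖cb n‖ * ‖u‖^n ≤ 1 * ‖u‖^n := by
        refine mul_le_mul_of_nonneg_right ?_ (by positivity)
        rw [Real.norm_eq_abs, abs_of_pos (cb_pos n)]; exact cb_le_one n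
    _ = ‖u‖^n := one_mul _

noncomputable def cS (u : ℂ) : ℂ := ∑' n, (cb n : ℂ) * u ^ n

lemma hasSum_cS {u : ℂ} (hu : ‖u‖ < 1) :
    HasSum (fun n => (cb n : ℂ) * u ^ n) (cS u) :=
  (summable_norm_cb_mul_pow hu).of_norm.hasSum

lemma hasSum_cS_mul {u v : ℂ} (hu : ‖u‖ < 1) (hv : ‖v‖ < 1) :
    HasSum (fun n => ∑ k ∈ range (n+1), ((cb k : ℂ) * u^k) * ((cb (n-k) : ℂ) * v^(n-k)))
      (cS u * cS v) := by
  have := hasSum_sum_range_mul_of_summable_norm (f := fun k => (cb k : ℂ) * u^k)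
    (g := fun k => (cb k : ℂ) * v^k) (summable_norm_cb_mul_pow hu) (summable_norm_cb_mul_pow hv)
  exact this

lemma cS_sq {u : ℂ} (hu : ‖u‖ < 1) : cS u * cS u = (1 - u)⁻¹ := by
  have h1 := hasSum_cS_mul hu hu
  have h2 : (fun n : ℕ => ∑ k ∈ range (n+1), ((cb k : ℂ) * u^k) * ((cb (n-k) : ℂ) * u^(n-k)))
      = fun n : ℕ => u ^ n := by
    funext n
    have hc : ∀ k ∈ range (n+1), ((cb k : ℂ) * u^k) * ((cb (n-k) : ℂ) * u^(n-k))
        = ((cb k * cb (n-k) : ℝ) : ℂ) * u ^ n := by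
      intro k hk
      have hk' : k ≤ n := by simpa [Nat.lt_succ_iff] using Finset.mem_range.mp hk
      have hp : u^(n-k) * u^k = u^n := by rw [← pow_add]; congr 1; omega
      push_cast
      rw [← hp]
      ring
    rw [Finset.sum_congr rfl hc, ← Finset.sum_mul]
    norm_cast
    rw [cb_sum n]
    norm_num
  rw [h2] at h1
  exact h1.unique (hasSum_geometric_of_norm_lt_one hu)

lemma cS_conj (u : ℂ) : cS ((starRingEnd ℂ) u) = (starRingEnd ℂ) (cS u) := by
  rw [cS, cS]
  show _ = star (∑' (n:ℕ), (cb n : ℂ) * u ^ n)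
  rw [tsum_star]
  congr 1; funext n
  simp [star_mul', mul_comm, Complex.star_def, map_pow, Complex.conj_ofReal]

noncomputable def T (γ : ℝ) (n : ℕ) : ℝ :=
  ∑ k ∈ range (n+1), cb k * cb (n-k) * Real.cos ((2*(k:ℝ) - (n:ℝ)) * γ)

lemma T_abs_le_one (γ : ℝ) (n : ℕ) : |T γ n| ≤ 1 := by
  calc |T γ n| ≤ ∑ k ∈ range (n+1), |cb k * cb (n-k) * Real.cos ((2*(k:ℝ) - (n:ℝ)) * γ)| :=
        Finset.abs_sum_le_sum_abs _ _
    _ ≤ ∑ k ∈ range (n+1), cb k * cb (n-k) := by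
        refine Finset.sum_le_sum fun k hk => ?_
        rw [abs_mul, abs_mul, abs_of_pos (cb_pos k), abs_of_pos (cb_pos (n-k))]
        calc cb k * cb (n-k) * |Real.cos _| ≤ cb k * cb (n-k) * 1 := by
              exact mul_le_mul_of_nonneg_left (Real.abs_cos_le_one _)
                (mul_nonneg (cb_pos k).le (cb_pos (n-k)).le)
          _ = cb k * cb (n-k) := mul_one _
    _ = 1 := cb_sum n

lemma quadA_pos {h c : ℝ} (hh : |h| < 1) (hc : |c| ≤ 1) : 0 < 1 - 2*c*h + h^2 := by
  have h1 : |c*h| ≤ |h| := by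
    rw [abs_mul]; nlinarith [abs_nonneg h]
  have h2 : c*h ≤ |h| := le_trans (le_abs_self _) h1
  have h4 : 0 < 1 - |h| := by linarith
  nlinarith [mul_pos h4 h4, sq_abs h, h2]

lemma hasSum_T (γ : ℝ) {h : ℝ} (hh : |h| < 1) :
    HasSum (fun n => h^n * T γ n) (1 / Real.sqrt (1 - 2*(Real.cos γ)*h + h^2)) := by
  set c := Real.cos γ with hc
  have hd : 0 < 1 - 2*c*h + h^2 := quadA_pos hh (abs_cos_le_one γ)
  set u : ℂ := (h:ℂ) * Complex.exp (γ * Complex.I) with hu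
  have hnu : ‖u‖ < 1 := by
    rw [hu, norm_mul, Complex.norm_exp_ofReal_mul_I,
      mul_one, Complex.norm_real, Real.norm_eq_abs]
    exact hh
  have hnuc : ‖(starRingEnd ℂ) u‖ < 1 := by rwa [RCLike.norm_conj]
  -- the Cauchy product
  have H := hasSum_cS_mul hnu hnuc
  -- identify the sum target
  have hA : cS u * cS ((starRingEnd ℂ) u) = ((Complex.normSq (cS u) : ℝ) : ℂ) := by
    rw [cS_conj, Complex.mul_conj]
  have hAsq : (((Complex.normSq (cS u) : ℝ) : ℂ)) * (((Complex.normSq (cS u) : ℝ) : ℂ))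
      = ((1 - 2*c*h + h^2 : ℝ) : ℂ)⁻¹ := by
    rw [← hA]
    have e1 : cS u * cS ((starRingEnd ℂ) u) * (cS u * cS ((starRingEnd ℂ) u))
        = (cS u * cS u) * (cS ((starRingEnd ℂ) u) * cS ((starRingEnd ℂ) u)) := by ring
    rw [e1, cS_sq hnu, cS_sq hnuc, ← mul_inv]
    congr 1
    have : (1 - u) * (1 - (starRingEnd ℂ) u) = 1 - (u + (starRingEnd ℂ) u) + u * (starRingEnd ℂ) u := by
      ring
    rw [this, Complex.add_conj, Complex.mul_conj]
    have hre : u.re = h * c := by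
      rw [hu, hc]
      simp [Complex.exp_ofReal_mul_I_re]
    have hnsq : Complex.normSq u = h^2 := by
      rw [hu, Complex.normSq_mul]
      have : Complex.normSq (Complex.exp (γ * Complex.I)) = 1 := by
        have := Complex.norm_exp_ofReal_mul_I γ
        rw [← Complex.sq_norm, this]; norm_num
      simp [this, Complex.normSq_ofReal]
      ring
    rw [hre, hnsq]
    push_cast
    ring
  have hnn : (0:ℝ) ≤ Complex.normSq (cS u) := Complex.normSq_nonneg _
  have hsq : (Complex.normSq (cS u))^2 = (1 - 2*c*h + h^2)⁻¹ := by
    have := hAsq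
    rw [← Complex.ofReal_mul, ← Complex.ofReal_inv] at this
    have := Complex.ofReal_injective this
    nlinarith [this]
  have hval : Complex.normSq (cS u) = 1 / Real.sqrt (1 - 2*c*h + h^2) := by
    have h1 : Complex.normSq (cS u) = Real.sqrt ((1 - 2*c*h + h^2)⁻¹) := by
      rw [← hsq, Real.sqrt_sq hnn]
    rw [h1, one_div, Real.sqrt_inv]
  -- identify the terms
  have hterm : ∀ n : ℕ, ∑ k ∈ range (n+1), ((cb k : ℂ) * u^k) * ((cb (n-k) : ℂ) * ((starRingEnd ℂ) u)^(n-k))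
      = ((h^n * T γ n : ℝ) : ℂ) := by
    intro n
    have e1 : ∀ k ∈ range (n+1), ((cb k : ℂ) * u^k) * ((cb (n-k) : ℂ) * ((starRingEnd ℂ) u)^(n-k))
        = ((cb k * cb (n-k) * h^n * Real.cos ((2*(k:ℝ) - (n:ℝ))*γ) : ℝ) : ℂ)
          + ((cb k * cb (n-k) * h^n * Real.sin ((2*(k:ℝ) - (n:ℝ))*γ) : ℝ) : ℂ) * Complex.I := by
      intro k hk
      have hk' : k ≤ n := by simpa [Nat.lt_succ_iff] using Finset.mem_range.mp hk
      have hcu : (starRingEnd ℂ) u = (h:ℂ) * Complex.exp (-(γ:ℂ) * Complex.I) := by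
        rw [hu, map_mul, Complex.conj_ofReal, ← Complex.exp_conj]
        congr 2
        simp [Complex.ext_iff]
      have hexp : Complex.exp ((k:ℂ)*((γ:ℂ)*Complex.I)) * Complex.exp ((↑(n-k):ℂ)*(-(γ:ℂ)*Complex.I))
          = Complex.cos ((((2*(k:ℝ)-(n:ℝ))*γ : ℝ)):ℂ) + Complex.sin ((((2*(k:ℝ)-(n:ℝ))*γ : ℝ)):ℂ) * Complex.I := by
        rw [← Complex.exp_add]
        have hnk : ((↑(n-k):ℂ)) = (n:ℂ)-(k:ℂ) := by push_cast [hk']; ring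
        have harg : (k:ℂ)*((γ:ℂ)*Complex.I) + (↑(n-k):ℂ)*(-(γ:ℂ)*Complex.I)
            = ((((2*(k:ℝ)-(n:ℝ))*γ:ℝ)):ℂ) * Complex.I := by
          rw [hnk]; push_cast; ring
        rw [harg, Complex.exp_mul_I]
      have hp : (h:ℂ)^k * (h:ℂ)^(n-k) = (h:ℂ)^n := by
        rw [← pow_add]; congr 1; omega
      rw [hcu, hu, mul_pow, mul_pow, ← Complex.exp_nat_mul, ← Complex.exp_nat_mul]
      calc (cb k:ℂ) * ((h:ℂ)^k * Complex.exp ((k:ℂ)*((γ:ℂ)*Complex.I)))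
            * ((cb (n-k):ℂ) * ((h:ℂ)^(n-k) * Complex.exp ((↑(n-k):ℂ)*(-(γ:ℂ)*Complex.I))))
          = ((cb k:ℂ) * (cb (n-k):ℂ)) * (((h:ℂ)^k * (h:ℂ)^(n-k))
              * (Complex.exp ((k:ℂ)*((γ:ℂ)*Complex.I)) * Complex.exp ((↑(n-k):ℂ)*(-(γ:ℂ)*Complex.I)))) := by
            ring
        _ = _ := by
            rw [hp, hexp, ← Complex.ofReal_cos, ← Complex.ofReal_sin]
            push_cast
            ring
    rw [Finset.sum_congr rfl e1, Finset.sum_add_distrib, ← Finset.sum_mul]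
    have hsin : ∑ k ∈ range (n+1), ((cb k * cb (n-k) * h^n * Real.sin ((2*(k:ℝ) - (n:ℝ))*γ) : ℝ) : ℂ) = 0 := by
      rw [← Complex.ofReal_sum, Complex.ofReal_eq_zero]
      have hrefl := Finset.sum_range_reflect
        (fun k => cb k * cb (n-k) * h^n * Real.sin ((2*(k:ℝ) - (n:ℝ))*γ)) (n+1)
      have hneg : ∀ k ∈ range (n+1),
          cb (n+1-1-k) * cb (n-(n+1-1-k)) * h^n * Real.sin ((2*((n+1-1-k:ℕ):ℝ) - (n:ℝ))*γ)
          = -(cb k * cb (n-k) * h^n * Real.sin ((2*(k:ℝ) - (n:ℝ))*γ)) := by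
        intro k hk
        have hk' : k ≤ n := by simpa [Nat.lt_succ_iff] using Finset.mem_range.mp hk
        have h1 : n+1-1-k = n-k := by omega
        have h2 : n-(n-k) = k := by omega
        have h3 : ((n-k:ℕ):ℝ) = (n:ℝ) - (k:ℝ) := by push_cast [hk']; ring
        rw [h1, h2, h3]
        have h4 : (2*((n:ℝ) - (k:ℝ)) - (n:ℝ))*γ = -((2*(k:ℝ) - (n:ℝ))*γ) := by ring
        rw [h4, Real.sin_neg]
        ring
      rw [Finset.sum_congr rfl hneg, Finset.sum_neg_distrib] at hrefl
      linarith [hrefl]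
    rw [hsin, zero_mul, add_zero, ← Complex.ofReal_sum, Complex.ofReal_inj]
    rw [T, Finset.mul_sum]
    refine Finset.sum_congr rfl fun k hk => ?_
    ring
  have H2 : HasSum (fun n => ((h^n * T γ n : ℝ) : ℂ))
      (((1 / Real.sqrt (1 - 2*c*h + h^2) : ℝ)) : ℂ) := by
    have := H
    simp only [hterm] at this
    rwa [hA, hval] at this
  exact Complex.hasSum_ofReal.mp H2

lemma cb_mul_abs_le {t : ℝ} (m : ℕ) : |cb m * t^m| ≤ |t|^m := by
  rw [abs_mul, abs_pow, abs_of_pos (cb_pos m)]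
  calc cb m * |t|^m ≤ 1 * |t|^m :=
        mul_le_mul_of_nonneg_right (cb_le_one m) (by positivity)
    _ = |t|^m := one_mul _

lemma summable_cb_abs {t : ℝ} (ht : |t| < 1) : Summable (fun m => |cb m * t^m|) :=
  Summable.of_nonneg_of_le (fun n => abs_nonneg _) (fun n => cb_mul_abs_le n)
    (summable_geometric_of_lt_one (abs_nonneg t) ht)

set_option maxHeartbeats 1000000 in
lemma rS_eq {t : ℝ} (ht : |t| ≤ 3/10) :
    HasSum (fun m => cb m * t^m) (1 / Real.sqrt (1 - t)) := by
  have ht1 : |t| < 1 := by linarith [abs_nonneg t]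
  have hsum : Summable (fun m => cb m * t^m) := (summable_cb_abs ht1).of_abs
  set S := ∑' m, cb m * t^m with hS
  have hhs : HasSum (fun m => cb m * t^m) S := hsum.hasSum
  have hC : HasSum (fun m => (cb m : ℂ) * (t:ℂ)^m) ((S:ℝ) : ℂ) := by
    have h1 := Complex.hasSum_ofReal.mpr hhs
    convert h1 using 2 with m
    push_cast; ring
  have hcS : cS (t:ℂ) = ((S:ℝ):ℂ) := hC.tsum_eq
  have hsq : S^2 = (1 - t)⁻¹ := by
    have h1 : ‖(t:ℂ)‖ < 1 := by rwa [Complex.norm_real, Real.norm_eq_abs]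
    have h2 := cS_sq h1
    rw [hcS] at h2
    have h3 : ((S*S : ℝ) : ℂ) = (((1-t)⁻¹ : ℝ) : ℂ) := by push_cast; exact h2
    have h4 := Complex.ofReal_injective h3
    nlinarith [h4]
  have hpos : 0 < S := by
    have h0 : S = cb 0 * t^0 + ∑' m, cb (m+1) * t^(m+1) := Summable.tsum_eq_zero_add hsum
    have hst : Summable fun m => |cb (m+1) * t^(m+1)| :=
      (summable_nat_add_iff 1).mpr (summable_cb_abs ht1)
    have hsum2 : Summable fun m : ℕ => |t| * |t|^m :=
      (summable_geometric_of_lt_one (abs_nonneg t) ht1).mul_left _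
    have htail : |∑' m, cb (m+1) * t^(m+1)| ≤ 3/7 := by
      calc |∑' m, cb (m+1) * t^(m+1)| ≤ ∑' m, |cb (m+1) * t^(m+1)| := by
            simpa only [Real.norm_eq_abs] using norm_tsum_le_tsum_norm (f := fun m => cb (m+1) * t^(m+1)) (by simpa only [Real.norm_eq_abs] using hst)
        _ ≤ ∑' m : ℕ, |t| * |t|^m := by
            refine Summable.tsum_le_tsum (fun m => ?_) hst hsum2
            calc |cb (m+1) * t^(m+1)| ≤ |t|^(m+1) := cb_mul_abs_le _
              _ = |t| * |t|^m := by rw [pow_succ]; ring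
        _ = |t| * (1 - |t|)⁻¹ := by
            rw [tsum_mul_left, tsum_geometric_of_lt_one (abs_nonneg t) ht1]
        _ ≤ 3/7 := by
            have hinv : (1 - |t|)⁻¹ ≤ (7/10 : ℝ)⁻¹ :=
              inv_anti₀ (by norm_num) (by linarith)
            calc |t| * (1-|t|)⁻¹ ≤ (3/10) * (10/7) := by
                  refine mul_le_mul ht ?_ (inv_nonneg.mpr (by linarith)) (by norm_num)
                  rw [show ((7:ℝ)/10)⁻¹ = 10/7 by norm_num] at hinv; exact hinv
              _ ≤ 3/7 := by norm_num
    have hone : cb 0 * t^0 = 1 := by simp [cb, Nat.centralBinom_zero]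
    rw [h0, hone]
    have := abs_le.mp htail
    linarith
  have h1t : (0:ℝ) < 1 - t := by have := abs_le.mp ht; linarith
  have hfinal : S = 1 / Real.sqrt (1 - t) := by
    have h1 : S = Real.sqrt ((1-t)⁻¹) := by rw [← hsq, Real.sqrt_sq hpos.le]
    rw [h1, one_div, Real.sqrt_inv]
  rwa [hfinal] at hhs

noncomputable def Qc (x : ℝ) (n : ℕ) : ℝ :=
  ∑ p ∈ Finset.HasAntidiagonal.antidiagonal n,
    (if p.2 ≤ p.1 then cb p.1 * (p.1.choose p.2) * (2*x)^(p.1-p.2) * (-1:ℝ)^p.2 else 0)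

set_option maxHeartbeats 1000000 in
lemma hasSum_Q {x h : ℝ} (hx : |x| ≤ 1) (hh : |h| < 1/8) :
    HasSum (fun n => Qc x n * h^n) (1/Real.sqrt (1 - 2*x*h + h^2)) := by
  have hxh : |2*x*h| ≤ 2*|h| := by
    rw [abs_mul, abs_mul]
    have : |(2:ℝ)| = 2 := by norm_num
    rw [this]
    nlinarith [abs_nonneg h, abs_nonneg x]
  set t := 2*x*h - h^2 with htdef
  have hht : |t| ≤ 3/10 := by
    calc |t| ≤ |2*x*h| + |h^2| := abs_sub _ _
      _ ≤ 2*|h| + |h|^2 := by rw [abs_pow]; linarith [hxh]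
      _ ≤ 3/10 := by nlinarith [abs_nonneg h]
  have h1t : 1 - t = 1 - 2*x*h + h^2 := by ring
  set F : ℕ × ℕ → ℝ := fun p =>
    if p.2 ≤ p.1 then cb p.1 * (p.1.choose p.2) * (2*x)^(p.1-p.2) * (-1:ℝ)^p.2 * h^(p.1+p.2)
    else 0 with hF
  have hsupp : ∀ m j, m < j → F (m, j) = 0 := fun m j hj => if_neg (by omega)
  -- evaluation of the fibers
  have hfibval : ∀ m, ∑ j ∈ range (m+1), F (m,j) = cb m * t^m := by
    intro m
    have hbin : ∑ j ∈ range (m+1), (-1:ℝ)^j * (2*x)^(m-j) * h^j * (m.choose j) = (2*x - h)^m := by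
      rw [sub_pow]
      rw [← Finset.sum_range_reflect]
      refine Finset.sum_congr rfl fun j hj => ?_
      have hj' : j ≤ m := by simpa [Nat.lt_succ_iff] using Finset.mem_range.mp hj
      have e1 : m+1-1-j = m-j := by omega
      have e2 : m-(m-j) = j := by omega
      have e4 : m.choose (m-j) = m.choose j := Nat.choose_symm hj'
      have e5 : (-1:ℝ)^(m - j) = (-1:ℝ)^(j + m) := by
        rw [show j + m = (m - j) + 2*j by omega, pow_add, pow_mul]
        norm_num
      rw [e1, e2, e4, e5]
    have hsum : ∑ j ∈ range (m+1), F (m,j)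
        = cb m * h^m * ∑ j ∈ range (m+1), (-1:ℝ)^j * (2*x)^(m-j) * h^j * (m.choose j) := by
      rw [Finset.mul_sum]
      refine Finset.sum_congr rfl fun j hj => ?_
      have hj' : j ≤ m := by simpa [Nat.lt_succ_iff] using Finset.mem_range.mp hj
      rw [hF]
      simp only [if_pos hj']
      rw [pow_add]
      ring
    rw [hsum, hbin, htdef]
    calc cb m * h^m * (2*x - h)^m = cb m * (h * (2*x - h))^m := by rw [mul_pow]; ring
      _ = cb m * (2*x*h - h^2)^m := by congr 2; ring
  -- summability
  set G : ℕ × ℕ → ℝ := fun p =>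
    if p.2 ≤ p.1 then (p.1.choose p.2) * 2^(p.1-p.2) * |h|^(p.1+p.2) else 0 with hG
  have hG0 : ∀ p, 0 ≤ G p := by
    intro p; rw [hG]; dsimp only; split_ifs
    · positivity
    · exact le_refl 0
  have habsle : ∀ p, |F p| ≤ G p := by
    rintro ⟨m, j⟩
    rw [hF, hG]; dsimp only
    split_ifs with hc
    · rw [abs_mul, abs_mul, abs_mul, abs_mul, abs_pow, abs_pow, abs_pow]
      have h2x : |2*x| ≤ 2 := by rw [abs_mul]; rw [show |(2:ℝ)| = 2 by norm_num]; nlinarith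
      have : |(-1:ℝ)| = 1 := by norm_num
      rw [this, one_pow, abs_of_pos (cb_pos m)]
      have hcb : cb m ≤ 1 := cb_le_one m
      have e1 : |2*x|^(m-j) ≤ 2^(m-j) := pow_le_pow_left₀ (abs_nonneg _) h2x _
      have hch : |(m.choose j : ℝ)| = (m.choose j : ℝ) := abs_of_nonneg (by positivity)
      rw [hch]
      calc cb m * (m.choose j : ℝ) * |2*x|^(m-j) * 1 * |h|^(m+j)
          = cb m * ((m.choose j : ℝ) * |2*x|^(m-j) * |h|^(m+j)) := by ring
        _ ≤ 1 * ((m.choose j : ℝ) * 2^(m-j) * |h|^(m+j)) := by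
            refine mul_le_mul hcb ?_ (by positivity) (by norm_num)
            refine mul_le_mul_of_nonneg_right ?_ (by positivity)
            exact mul_le_mul_of_nonneg_left e1 (by positivity)
        _ = (m.choose j : ℝ) * 2^(m-j) * |h|^(m+j) := by ring
    · simp
  have hGfib : ∀ m, ∑' j, G (m, j) = (|h| * (|h| + 2))^m := by
    intro m
    have hfin : ∑' j, G (m, j) = ∑ j ∈ range (m+1), G (m,j) := by
      refine tsum_eq_sum fun j hj => ?_
      rw [hG]; exact if_neg (by simp at hj; omega)
    rw [hfin]
    have : ∑ j ∈ range (m+1), G (m,j) = |h|^m * ∑ j ∈ range (m+1), |h|^j * 2^(m-j) * (m.choose j) := by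
      rw [Finset.mul_sum]
      refine Finset.sum_congr rfl fun j hj => ?_
      have hj' : j ≤ m := by simpa [Nat.lt_succ_iff] using Finset.mem_range.mp hj
      rw [hG]; simp only [if_pos hj']
      rw [pow_add]; ring
    rw [this, ← add_pow]
    rw [mul_pow]
  have hGsum : Summable G := by
    rw [summable_prod_of_nonneg hG0]
    constructor
    · intro m
      apply summable_of_ne_finset_zero (s := range (m+1))
      intro j hj
      rw [hG]; exact if_neg (by simp at hj; omega)
    · have : (fun m => ∑' j, G (m, j)) = fun m => (|h| * (|h| + 2))^m := funext hGfib
      rw [this]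
      apply summable_geometric_of_lt_one (by positivity)
      nlinarith [abs_nonneg h]
  have hFsum : Summable F :=
    (Summable.of_nonneg_of_le (fun p => abs_nonneg _) habsle hGsum).of_abs
  -- total sum of F
  have hFtot : HasSum F (1/Real.sqrt (1 - t)) := by
    have h1 : ∑' p, F p = ∑' m, ∑' j, F (m, j) := Summable.tsum_prod' hFsum
      (fun m => summable_of_ne_finset_zero (s := range (m+1))
        (fun j hj => hsupp m j (by simpa using hj)))
    have h2 : ∀ m, ∑' j, F (m, j) = cb m * t^m := by
      intro m
      rw [tsum_eq_sum (s := range (m+1)) fun j hj => hsupp m j (by simpa using hj)]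
      exact hfibval m
    have h3 : ∑' p, F p = 1/Real.sqrt (1 - t) := by
      rw [h1]
      have : (fun m => ∑' j, F (m, j)) = fun m => cb m * t^m := funext h2
      rw [this, (rS_eq hht).tsum_eq]
    rw [← h3]
    exact hFsum.hasSum
  -- regroup along antidiagonals
  have hsig : HasSum (F ∘ (Finset.HasAntidiagonal.sigmaAntidiagonalEquivProd (A := ℕ))) (1/Real.sqrt (1 - t)) :=
    (Equiv.hasSum_iff _).mpr hFtot
  have hfib2 : ∀ n : ℕ, HasSum (fun p : (Finset.HasAntidiagonal.antidiagonal n : Finset (ℕ × ℕ)) =>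
      (F ∘ (Finset.HasAntidiagonal.sigmaAntidiagonalEquivProd (A := ℕ))) ⟨n, p⟩) (Qc x n * h^n) := by
    intro n
    have h1 : HasSum (fun p : (Finset.HasAntidiagonal.antidiagonal n : Finset (ℕ × ℕ)) => F ↑p)
        (∑ p ∈ Finset.HasAntidiagonal.antidiagonal n, F p) := by
      rw [← Finset.sum_coe_sort]
      exact hasSum_fintype _
    have h2 : ∑ p ∈ Finset.HasAntidiagonal.antidiagonal n, F p = Qc x n * h^n := by
      rw [Qc, Finset.sum_mul]
      refine Finset.sum_congr rfl fun p hp => ?_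
      have hpn : p.1 + p.2 = n := Finset.HasAntidiagonal.mem_antidiagonal.mp hp
      rw [hF]; dsimp only
      rw [hpn]
      split_ifs
      · ring
      · rw [zero_mul]
    rw [h2] at h1
    exact h1
  have := HasSum.sigma hsig hfib2
  rwa [h1t] at this

lemma choose_le_two_pow' (m j : ℕ) : m.choose j ≤ 2^m := by
  rcases le_or_gt j m with hj|hj
  · calc m.choose j ≤ ∑ i ∈ range (m+1), m.choose i :=
        Finset.single_le_sum (fun i _ => Nat.zero_le _) (Finset.mem_range.mpr (by omega))
      _ = 2^m := Nat.sum_range_choose m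
  · rw [Nat.choose_eq_zero_of_lt hj]; exact Nat.zero_le _

lemma Qc_abs_le {x : ℝ} (hx : |x| ≤ 1) (n : ℕ) : |Qc x n| ≤ (n+1) * 4^n := by
  have hterm : ∀ p ∈ Finset.HasAntidiagonal.antidiagonal n,
      |if p.2 ≤ p.1 then cb p.1 * (p.1.choose p.2) * (2*x)^(p.1-p.2) * (-1:ℝ)^p.2 else 0|
        ≤ 4^n := by
    rintro ⟨m, j⟩ hp
    have hmn : m + j = n := Finset.HasAntidiagonal.mem_antidiagonal.mp hp
    dsimp only
    split_ifs with hc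
    · rw [abs_mul, abs_mul, abs_mul, abs_pow, abs_pow]
      rw [show |(-1:ℝ)| = 1 by norm_num, one_pow, mul_one, abs_of_pos (cb_pos m)]
      have h1 : cb m ≤ 1 := cb_le_one m
      have h2 : |(m.choose j : ℝ)| ≤ 2^m := by
        rw [abs_of_nonneg (by positivity)]
        exact_mod_cast choose_le_two_pow' m j
      have h3 : |2*x|^(m-j) ≤ 2^m := by
        calc |2*x|^(m-j) ≤ 2^(m-j) := by
              apply pow_le_pow_left₀ (abs_nonneg _)
              rw [abs_mul, show |(2:ℝ)| = 2 by norm_num]; nlinarith [abs_nonneg x]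
          _ ≤ 2^m := pow_le_pow_right₀ (by norm_num) (by omega)
      calc cb m * |(m.choose j : ℝ)| * |2*x|^(m-j)
          ≤ 1 * (2^m) * (2^m) := by
            refine mul_le_mul ?_ h3 (by positivity) (by positivity)
            refine mul_le_mul h1 h2 (abs_nonneg _) (by norm_num)
        _ = 4^m := by rw [one_mul, ← pow_add, show m+m = 2*m by omega, pow_mul]; norm_num
        _ ≤ 4^n := pow_le_pow_right₀ (by norm_num) (by omega)
    · simpa using (by positivity : (0:ℝ) ≤ 4^n)
  calc |Qc x n| ≤ ∑ p ∈ Finset.HasAntidiagonal.antidiagonal n,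
        |if p.2 ≤ p.1 then cb p.1 * (p.1.choose p.2) * (2*x)^(p.1-p.2) * (-1:ℝ)^p.2 else 0| :=
        Finset.abs_sum_le_sum_abs _ _
    _ ≤ ∑ _p ∈ Finset.HasAntidiagonal.antidiagonal n, (4:ℝ)^n := Finset.sum_le_sum hterm
    _ = (n+1) * 4^n := by
        rw [Finset.sum_const, Finset.Nat.card_antidiagonal]
        push_cast; ring

set_option maxHeartbeats 1000000 in
lemma coeff_unique {a : ℕ → ℝ} {r : ℝ} (hr : 0 < r)
    (hsum : Summable fun n => |a n| * r^n)
    (hzero : ∀ h : ℝ, |h| < r → HasSum (fun n => a n * h^n) 0) : ∀ n, a n = 0 := by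
  intro n
  induction n using Nat.strong_induction_on with
  | _ n ih =>
  have hCs : Summable fun k => |a (k+(n+1))| * r^k := by
    have h1 : Summable fun k => |a (k+(n+1))| * r^(k+(n+1)) := (summable_nat_add_iff (n+1)).mpr hsum
    have h2 := h1.mul_left ((r^(n+1))⁻¹)
    refine h2.congr fun k => ?_
    rw [pow_add]
    field_simp
    ring
  set C := ∑' k, |a (k+(n+1))| * r^k with hC
  have hC0 : 0 ≤ C := tsum_nonneg fun k => by positivity
  have key : ∀ h : ℝ, 0 < |h| → |h| < r → |a n| ≤ |h| * C := by
    intro h hpos hlt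
    have hs := hzero h hlt
    have hsm := hs.summable
    have tsum0 : ∑' m, a m * h^m = 0 := hs.tsum_eq
    have hsplit := Summable.sum_add_tsum_nat_add (f := fun m => a m * h^m) n hsm
    have hzero' : ∑ i ∈ range n, a i * h^i = 0 := by
      refine Finset.sum_eq_zero fun i hi => ?_
      rw [ih i (Finset.mem_range.mp hi), zero_mul]
    rw [hzero', zero_add, tsum0] at hsplit
    -- hsplit : ∑' k, a (k+n) * h^(k+n) = 0
    have hsm2 : Summable fun k => a (k+n) * h^(k+n) := (summable_nat_add_iff n).mpr hsm
    have hsplit2 := Summable.tsum_eq_zero_add hsm2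
    rw [hsplit] at hsplit2
    simp only [Nat.zero_add] at hsplit2
    -- 0 = a n * h^n + ∑' k, a (k+1+n) * h^(k+1+n)
    have htail : ∀ k : ℕ, a (k+1+n) * h^(k+1+n) = h^n * h * (a (k+(n+1)) * h^k) := by
      intro k
      rw [show k+1+n = k+(n+1) by omega, pow_add, pow_add]
      ring
    have hsmt : Summable fun k => a (k+(n+1)) * h^k := by
      refine Summable.of_abs (Summable.of_nonneg_of_le (fun k => abs_nonneg _) (fun k => ?_) hCs)
      rw [abs_mul, abs_pow]
      refine mul_le_mul_of_nonneg_left ?_ (abs_nonneg _)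
      exact pow_le_pow_left₀ (abs_nonneg h) hlt.le k
    have hsum_tail : ∑' k, a (k+1+n) * h^(k+1+n) = h^n * h * ∑' k, a (k+(n+1)) * h^k := by
      rw [← tsum_mul_left]
      exact tsum_congr htail
    rw [hsum_tail] at hsplit2
    have habs : |a n| * |h|^n = |h|^n * |h| * |∑' k, a (k+(n+1)) * h^k| := by
      have : a n * h^n = -(h^n * h * ∑' k, a (k+(n+1)) * h^k) := by linarith [hsplit2]
      calc |a n| * |h|^n = |a n * h^n| := by rw [abs_mul, abs_pow]
        _ = |h^n * h * ∑' k, a (k+(n+1)) * h^k| := by rw [this, abs_neg]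
        _ = |h|^n * |h| * |∑' k, a (k+(n+1)) * h^k| := by rw [abs_mul, abs_mul, abs_pow]
    have htsle : |∑' k, a (k+(n+1)) * h^k| ≤ C := by
      calc |∑' k, a (k+(n+1)) * h^k| ≤ ∑' k, |a (k+(n+1)) * h^k| := by
            simpa only [Real.norm_eq_abs] using norm_tsum_le_tsum_norm
              (f := fun k => a (k+(n+1)) * h^k) (by simpa only [Real.norm_eq_abs] using hsmt.abs)
        _ ≤ C := by
            refine Summable.tsum_le_tsum (fun k => ?_) hsmt.abs hCs
            rw [abs_mul, abs_pow]
            exact mul_le_mul_of_nonneg_left (pow_le_pow_left₀ (abs_nonneg h) hlt.le k) (abs_nonneg _)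
    have hpown : (0:ℝ) < |h|^n := by positivity
    have := habs
    nlinarith [mul_le_mul_of_nonneg_left htsle (le_of_lt (mul_pos hpown hpos)),
      mul_pos hpown hpos]
  by_contra hne
  have habs0 : 0 < |a n| := abs_pos.mpr hne
  set h0 := min (r/2) (|a n|/(2*(C+1))) with hh0
  have hh0pos : 0 < h0 := lt_min (by linarith) (by positivity)
  have hh0lt : |h0| < r := by
    rw [abs_of_pos hh0pos]
    calc h0 ≤ r/2 := min_le_left _ _
      _ < r := by linarith
  have := key h0 (by rwa [abs_of_pos hh0pos]) hh0lt
  rw [abs_of_pos hh0pos] at this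
  have h0le : h0 ≤ |a n|/(2*(C+1)) := min_le_right _ _
  have : |a n| ≤ (|a n|/(2*(C+1))) * C := by
    calc |a n| ≤ h0 * C := this
      _ ≤ (|a n|/(2*(C+1))) * C := mul_le_mul_of_nonneg_right h0le hC0
  have hCC : (0:ℝ) < C + 1 := by linarith
  rw [div_mul_eq_mul_div, le_div_iff₀ (by positivity)] at this
  nlinarith [mul_pos habs0 (show (0:ℝ) < C+2 by linarith)]

lemma T_eq_Q {x : ℝ} (hx : |x| ≤ 1) (n : ℕ) : T (Real.arccos x) n = Qc x n := by
  have hx1 := abs_le.mp hx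
  have hcos : Real.cos (Real.arccos x) = x := Real.cos_arccos hx1.1 hx1.2
  have hzero : ∀ h : ℝ, |h| < 1/8 →
      HasSum (fun k => (T (Real.arccos x) k - Qc x k) * h^k) 0 := by
    intro h hh
    have h1 : |h| < 1 := by linarith [abs_nonneg h]
    have hT := hasSum_T (Real.arccos x) h1
    rw [hcos] at hT
    have hQ := hasSum_Q hx hh
    have := hT.sub hQ
    rw [sub_self] at this
    refine this.congr_fun fun k => ?_
    ring
  have h12 : ‖(1/2:ℝ)‖ < 1 := by
    rw [Real.norm_eq_abs, abs_of_nonneg (by norm_num : (0:ℝ) ≤ 1/2)]; norm_num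
  have hsum : Summable fun k => |T (Real.arccos x) k - Qc x k| * (1/8:ℝ)^k := by
    refine Summable.of_nonneg_of_le (fun k => by positivity) (fun k => ?_)
      (((summable_pow_mul_geometric_of_norm_lt_one 1 h12).mul_left 2).add
        ((summable_geometric_of_lt_one (by norm_num) (by norm_num : (1/2:ℝ) < 1)).mul_left 2))
    have e1 : |T (Real.arccos x) k - Qc x k| ≤ 1 + ((k:ℝ)+1)*4^k := by
      calc |T (Real.arccos x) k - Qc x k| ≤ |T (Real.arccos x) k| + |Qc x k| := abs_sub _ _
        _ ≤ 1 + ((k:ℝ)+1)*4^k := add_le_add (T_abs_le_one _ _) (Qc_abs_le hx k)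
    have e2 : (4:ℝ)^k * (1/8)^k = (1/2)^k := by rw [← mul_pow]; norm_num
    have e3 : (1+((k:ℝ)+1)*4^k)*((1/8:ℝ))^k = (1/8:ℝ)^k + ((k:ℝ)+1)*(1/2)^k := by
      rw [← e2]; ring
    have e4 : ((1/8:ℝ))^k ≤ ((1/2:ℝ))^k :=
      pow_le_pow_left₀ (by norm_num) (by norm_num) k
    have hk : (0:ℝ) ≤ (k:ℝ) := Nat.cast_nonneg k
    have hhalf : (0:ℝ) ≤ ((1/2:ℝ))^k := by positivity
    calc |T (Real.arccos x) k - Qc x k| * (1/8:ℝ)^k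
        ≤ (1+((k:ℝ)+1)*4^k)*((1/8:ℝ))^k :=
          mul_le_mul_of_nonneg_right e1 (by positivity)
      _ ≤ 2*((k:ℝ)^1*(1/2)^k) + 2*(1/2)^k := by
          rw [e3, pow_one]
          nlinarith [mul_nonneg hk hhalf]
  have := coeff_unique (by norm_num : (0:ℝ) < 1/8) hsum hzero n
  linarith [this]

lemma iteratedDeriv_polynomial (n : ℕ) : ∀ (p : Polynomial ℝ),
    iteratedDeriv n (fun y => p.eval y) = fun x => (derivative^[n] p).eval x := by
  induction n with
  | zero => intro p; simp
  | succ n ih =>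
    intro p
    rw [iteratedDeriv_succ']
    have h1 : deriv (fun y => p.eval y) = fun y => (derivative p).eval y := by
      funext y; exact Polynomial.deriv (𝕜 := ℝ) p
    rw [h1, ih (derivative p)]
    funext x
    rw [Function.iterate_succ_apply]

lemma poly_expand (n : ℕ) : ((X:ℝ[X])^2 - 1)^n
    = ∑ m ∈ range (n+1), Polynomial.C ((-1:ℝ)^(m+n) * (n.choose m)) * X^(2*m) := by
  rw [sub_pow]
  refine Finset.sum_congr rfl fun m hm => ?_
  rw [one_pow, mul_one, map_mul, pow_mul]
  rw [Polynomial.C_pow]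
  simp only [map_neg, map_one, Polynomial.C_eq_natCast]
  ring

lemma legendre_explicit (n : ℕ) (x : ℝ) :
    legendrePoly n x = (1 / (2^n * (n.factorial : ℝ))) *
      ∑ m ∈ range (n+1), (-1:ℝ)^(m+n) * (n.choose m) * (((2*m).descFactorial n : ℝ)) * x^(2*m-n) := by
  rw [legendrePoly]
  congr 1
  have hfun : (fun y : ℝ => (y^2 - 1)^n) = fun y => (((X:ℝ[X])^2 - 1)^n).eval y := by
    funext y; simp
  rw [hfun, iteratedDeriv_polynomial n]
  dsimp only
  rw [poly_expand, Polynomial.iterate_derivative_sum, Polynomial.eval_finset_sum]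
  refine Finset.sum_congr rfl fun m hm => ?_
  rw [Polynomial.iterate_derivative_C_mul, Polynomial.iterate_derivative_X_pow_eq_smul]
  simp [Polynomial.eval_smul, smul_eq_mul]
  ring

lemma factorial_cast_ne_zero (k : ℕ) : ((k.factorial : ℝ)) ≠ 0 :=
  Nat.cast_ne_zero.mpr (Nat.factorial_ne_zero k)

lemma coeff_match (j l : ℕ) :
    (1 / (2^(2*j+l) * ((2*j+l).factorial : ℝ))) * (((2*j+l).choose (j+l) : ℝ))
        * (((2*(j+l)).descFactorial (2*j+l) : ℝ))
      = cb (j+l) * (((j+l).choose j : ℝ)) * 2^l := by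
  have hD : ((l.factorial : ℝ)) * (((2*(j+l)).descFactorial (2*j+l)) : ℝ)
      = ((2*(j+l)).factorial : ℝ) := by
    have h1 : 2*j+l ≤ 2*(j+l) := by omega
    have h2 := Nat.factorial_mul_descFactorial h1
    rw [show 2*(j+l) - (2*j+l) = l by omega] at h2
    exact_mod_cast congrArg (Nat.cast (R:=ℝ)) h2
  have hC1 : (((2*j+l).choose (j+l) : ℝ))
      = ((2*j+l).factorial : ℝ) / (((j+l).factorial : ℝ) * ((j.factorial : ℝ))) := by
    rw [Nat.cast_choose ℝ (by omega : j+l ≤ 2*j+l), show 2*j+l-(j+l) = j by omega]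
  have hC2 : (((j+l).choose j : ℝ))
      = ((j+l).factorial : ℝ) / ((j.factorial : ℝ) * ((l.factorial : ℝ))) := by
    rw [Nat.cast_choose ℝ (by omega : j ≤ j+l), show j+l-j = l by omega]
  have hcb : cb (j+l)
      = ((2*(j+l)).factorial : ℝ) / (((j+l).factorial : ℝ) * ((j+l).factorial : ℝ) * 4^(j+l)) := by
    rw [cb, Nat.centralBinom]
    rw [Nat.cast_choose ℝ (by omega : j+l ≤ 2*(j+l)), show 2*(j+l)-(j+l) = j+l by omega]
    field_simp
  have hdesc : (((2*(j+l)).descFactorial (2*j+l)) : ℝ)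
      = ((2*(j+l)).factorial : ℝ) / (l.factorial : ℝ) := by
    rw [← hD]; field_simp [factorial_cast_ne_zero]
  rw [hC1, hC2, hcb, hdesc]
  have h4 : (4:ℝ)^(j+l) = 2^(j+l) * 2^(j+l) := by rw [← mul_pow]; norm_num
  rw [h4]
  have hpow : (2:ℝ)^(2*j+l) * 2^l = 2^(j+l) * 2^(j+l) := by
    rw [← pow_add, ← pow_add]; congr 1; omega
  field_simp [factorial_cast_ne_zero]
  linear_combination (((2*j+l).factorial : ℝ)) * (((2*(j+l)).factorial : ℝ)) * hpow

lemma legendre_eq_Qc (x : ℝ) (n : ℕ) : legendrePoly n x = Qc x n := by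
  rw [legendre_explicit, Qc, Finset.Nat.sum_antidiagonal_eq_sum_range_succ_mk, Finset.mul_sum]
  refine Finset.sum_congr rfl fun m hm => ?_
  have hm' : m ≤ n := by simpa [Nat.lt_succ_iff] using Finset.mem_range.mp hm
  dsimp only
  by_cases hc : n - m ≤ m
  · rw [if_pos hc]
    obtain ⟨j, l, hmjl, hnjl⟩ : ∃ j l, m = j + l ∧ n = 2*j + l :=
      ⟨n - m, m - (n - m), by omega, by omega⟩
    subst hmjl
    subst hnjl
    rw [show 2*(j+l) - (2*j+l) = l by omega, show (2*j+l) - (j+l) = j by omega,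
      show (j+l) - j = l by omega]
    have hsgn : (-1:ℝ)^((j+l)+(2*j+l)) = (-1:ℝ)^j := by
      rw [show (j+l)+(2*j+l) = j + 2*(j+l) by omega, pow_add, pow_mul]
      norm_num
    rw [hsgn]
    have h2x : (2*x)^l = 2^l * x^l := by rw [mul_pow]
    rw [h2x]
    linear_combination ((-1:ℝ)^j * x^l) * coeff_match j l
  · rw [if_neg hc]
    have hz : (2*m).descFactorial n = 0 :=
      Nat.descFactorial_eq_zero_iff_lt.mpr (by omega)
    rw [hz]
    push_cast
    ring

lemma main_hasSum {x h : ℝ} (hx : |x| ≤ 1) (hh : 0 < h) (hh1 : h < 1) :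
    HasSum (fun n => legendrePoly n x * h^n) (1 / Real.sqrt (1 - 2*x*h + h^2)) ∧
    Summable (fun n => |legendrePoly n x * h^n|) := by
  have hx1 := abs_le.mp hx
  have hcos : Real.cos (Real.arccos x) = x := Real.cos_arccos hx1.1 hx1.2
  have hhabs : |h| < 1 := by rw [abs_of_pos hh]; exact hh1
  have hT := hasSum_T (Real.arccos x) hhabs
  rw [hcos] at hT
  have hTQ : ∀ n, T (Real.arccos x) n = legendrePoly n x := by
    intro n
    rw [T_eq_Q hx n, legendre_eq_Qc x n]
  constructor
  · refine hT.congr_fun fun n => ?_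
    rw [hTQ n]; ring
  · refine Summable.of_nonneg_of_le (fun n => abs_nonneg _) (fun n => ?_)
      (summable_geometric_of_lt_one (abs_nonneg h) hhabs)
    rw [abs_mul, abs_pow, ← hTQ n]
    calc |T (Real.arccos x) n| * |h|^n ≤ 1 * |h|^n :=
          mul_le_mul_of_nonneg_right (T_abs_le_one _ n) (by positivity)
      _ = |h|^n := one_mul _

/-- Laplace expansion of the Newtonian potential: for `0 < r < r*` and points
`𝐫, 𝐫*` with spherical coordinates `(r,θ,φ)` and `(r*,θ*,φ*)`,
`1/‖𝐫−𝐫*‖ = Σ_{n=0}^∞ (rⁿ/(r*)^{n+1}) P_n(cosθ cosθ* + sinθ sinθ* cos(φ−φ*))`,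
with absolute convergence. -/
theorem stmt18 (r rs θ θs φ φs : ℝ) (hr : 0 < r) (hrs : r < rs)
    (hθ : θ ∈ Set.Icc 0 π) (hθs : θs ∈ Set.Icc 0 π) :
    HasSum (fun n : ℕ => r^n / rs^(n+1) *
        legendrePoly n (Real.cos θ * Real.cos θs
          + Real.sin θ * Real.sin θs * Real.cos (φ - φs)))
      (1 / Real.sqrt ((r * Real.sin θ * Real.cos φ - rs * Real.sin θs * Real.cos φs)^2
          + (r * Real.sin θ * Real.sin φ - rs * Real.sin θs * Real.sin φs)^2
          + (r * Real.cos θ - rs * Real.cos θs)^2)) ∧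
    Summable (fun n : ℕ => |r^n / rs^(n+1) *
        legendrePoly n (Real.cos θ * Real.cos θs
          + Real.sin θ * Real.sin θs * Real.cos (φ - φs))|) := by
  have hrs0 : 0 < rs := lt_trans hr hrs
  set x := Real.cos θ * Real.cos θs + Real.sin θ * Real.sin θs * Real.cos (φ - φs) with hxdef
  have hs1 : 0 ≤ Real.sin θ := Real.sin_nonneg_of_nonneg_of_le_pi hθ.1 hθ.2
  have hs2 : 0 ≤ Real.sin θs := Real.sin_nonneg_of_nonneg_of_le_pi hθs.1 hθs.2
  have hx : |x| ≤ 1 := by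
    rw [abs_le]
    constructor
    · nlinarith [mul_nonneg hs1 hs2, Real.cos_le_one (φ - φs), Real.neg_one_le_cos (φ - φs),
        Real.cos_add θ θs, Real.neg_one_le_cos (θ + θs)]
    · nlinarith [mul_nonneg hs1 hs2, Real.cos_le_one (φ - φs), Real.neg_one_le_cos (φ - φs),
        Real.cos_sub θ θs, Real.cos_le_one (θ - θs)]
  set h := r / rs with hhdef
  have hh : 0 < h := div_pos hr hrs0
  have hh1 : h < 1 := (div_lt_one hrs0).mpr hrs
  obtain ⟨hmain, hsummable⟩ := main_hasSum hx hh hh1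
  -- the norm computation
  set N := (r * Real.sin θ * Real.cos φ - rs * Real.sin θs * Real.cos φs)^2
      + (r * Real.sin θ * Real.sin φ - rs * Real.sin θs * Real.sin φs)^2
      + (r * Real.cos θ - rs * Real.cos θs)^2 with hNdef
  have hN : N = rs^2 * (1 - 2*x*h + h^2) := by
    have e1 : N = r^2 - 2*r*rs*x + rs^2 := by
      rw [hNdef, hxdef]
      linear_combination (r^2*(Real.sin θ)^2) * (Real.sin_sq_add_cos_sq φ)
        + r^2 * (Real.sin_sq_add_cos_sq θ)
        + (rs^2*(Real.sin θs)^2) * (Real.sin_sq_add_cos_sq φs)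
        + rs^2 * (Real.sin_sq_add_cos_sq θs)
        + (2*r*rs*Real.sin θ*Real.sin θs) * (Real.cos_sub φ φs)
    rw [e1, hhdef]
    field_simp
    ring
  have hsqrtN : Real.sqrt N = rs * Real.sqrt (1 - 2*x*h + h^2) := by
    rw [hN, Real.sqrt_mul (sq_nonneg rs), Real.sqrt_sq hrs0.le]
  have hterm : ∀ n : ℕ, r^n / rs^(n+1) * legendrePoly n x
      = (legendrePoly n x * h^n) * (1/rs) := by
    intro n
    rw [hhdef, div_pow, pow_succ]
    field_simp
  constructor
  · have h2 := hmain.mul_right (1/rs)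
    have h3 : (1 / Real.sqrt (1 - 2*x*h + h^2)) * (1/rs) = 1 / Real.sqrt N := by
      rw [hsqrtN]
      field_simp
    rw [h3] at h2
    exact h2.congr_fun fun n => hterm n
  · refine Summable.of_nonneg_of_le (fun n => abs_nonneg _) (fun n => ?_)
      (hsummable.mul_right (1/rs))
    rw [hterm n, abs_mul]
    have : |1/rs| = 1/rs := abs_of_pos (by positivity)
    rw [this]
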